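/- If e : ℝ → ℝ is differentiable and satisfies e'(t) + K_p * e(t) = d(t) for all t ≥ 0, where K_p > 0 and |d(t)| ≤ ε for all t, then limsup_{t→∞} |e(t)| ≤ ε / K_p. -/

import Mathlib

open Real Filter

private lemma aux_upper (e d : ℝ → ℝ) (Kp ε : ℝ) (hKp : 0 < Kp)
    (hdiff : Differentiable ℝ e)
    (hode : ∀ t : ℝ, 0 ≤ t → deriv e t + Kp * e t = d t)
    (hd : ∀ t : ℝ, d t ≤ ε) :
    ∀ t : ℝ, 0 ≤ t → e t ≤ (e 0 - ε / Kp) * Real.exp (-(Kp * t)) + ε / Kp := by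
  intro t ht
  set h : ℝ → ℝ := fun s => (e s - ε / Kp) * Real.exp (Kp * s) with hh
  have hder : ∀ s : ℝ, HasDerivAt h
      ((deriv e s + Kp * e s - ε) * Real.exp (Kp * s)) s := by
    intro s
    have h1 : HasDerivAt (fun s => e s - ε / Kp) (deriv e s) s :=
      ((hdiff s).hasDerivAt).sub_const _
    have h2 : HasDerivAt (fun s => Real.exp (Kp * s)) (Real.exp (Kp * s) * Kp) s := by
      simpa using ((hasDerivAt_id s).const_mul Kp).exp
    have := h1.mul h2
    refine this.congr_deriv ?_
    have hc : ε / Kp * Kp = ε := by field_simp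
    linear_combination (-Real.exp (Kp * s)) * hc
  have hanti : AntitoneOn h (Set.Ici (0:ℝ)) := by
    apply antitoneOn_of_deriv_nonpos (convex_Ici 0)
    · exact (Continuous.continuousOn (by
        have : Differentiable ℝ h := fun s => (hder s).differentiableAt
        exact this.continuous))
    · intro s hs
      exact (hder s).differentiableAt.differentiableWithinAt
    · intro s hs
      rw [interior_Ici] at hs
      rw [(hder s).deriv]
      have h0 : deriv e s + Kp * e s = d s := hode s (le_of_lt hs)
      rw [h0]
      have : d s - ε ≤ 0 := sub_nonpos.mpr (hd s)
      exact mul_nonpos_of_nonpos_of_nonneg this (Real.exp_pos _).le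
  have hle : h t ≤ h 0 := hanti (Set.self_mem_Ici) ht ht
  simp only [hh] at hle
  rw [mul_zero, Real.exp_zero, mul_one] at hle
  have hexp : (0:ℝ) < Real.exp (Kp * t) := Real.exp_pos _
  have : e t - ε / Kp ≤ (e 0 - ε / Kp) * Real.exp (-(Kp * t)) := by
    rw [Real.exp_neg, ← div_eq_mul_inv, le_div_iff₀ hexp]
    exact hle
  linarith

theorem stmt_1 (e d : ℝ → ℝ) (Kp ε : ℝ) (hKp : 0 < Kp)
    (hdiff : Differentiable ℝ e)
    (hode : ∀ t : ℝ, 0 ≤ t → deriv e t + Kp * e t = d t)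
    (hd : ∀ t : ℝ, |d t| ≤ ε) :
    Filter.limsup (fun t => |e t|) Filter.atTop ≤ ε / Kp := by
  have hε : 0 ≤ ε := (abs_nonneg (d 0)).trans (hd 0)
  have hεK : 0 ≤ ε / Kp := div_nonneg hε hKp.le
  have hup := aux_upper e d Kp ε hKp hdiff hode (fun t => (le_abs_self _).trans (hd t))
  have hlo := aux_upper (fun s => -e s) (fun s => -d s) Kp ε hKp hdiff.neg
    (by
      intro t ht
      have : deriv (fun s => -e s) t = -deriv e t := by
        simp [deriv.neg]
      have h2 := hode t ht
      show deriv (fun s => -e s) t + Kp * (-e t) = -d t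
      rw [this]
      linarith)
    (fun t => (neg_le_abs _).trans (hd t))
  have hbound : ∀ t : ℝ, 0 ≤ t →
      |e t| ≤ |e 0| * Real.exp (-(Kp * t)) + ε / Kp := by
    intro t ht
    have hexp : (0:ℝ) < Real.exp (-(Kp * t)) := Real.exp_pos _
    rw [abs_le]
    constructor
    · have h1 := hlo t ht
      have h2 : (-e 0 - ε / Kp) ≤ |e 0| := by
        have := neg_le_abs (e 0); linarith
      nlinarith [mul_le_mul_of_nonneg_right h2 hexp.le]
    · have h1 := hup t ht
      have h2 : (e 0 - ε / Kp) ≤ |e 0| := by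
        have := le_abs_self (e 0); linarith
      nlinarith [mul_le_mul_of_nonneg_right h2 hexp.le]
  set B : ℝ → ℝ := fun t => |e 0| * Real.exp (-(Kp * t)) + ε / Kp with hB
  have hBtend : Tendsto B atTop (nhds (ε / Kp)) := by
    have h1 : Tendsto (fun t : ℝ => -(Kp * t)) atTop atBot := by
      apply tendsto_neg_atBot_iff.mpr
      exact Tendsto.const_mul_atTop hKp tendsto_id
    have h2 : Tendsto (fun t : ℝ => Real.exp (-(Kp * t))) atTop (nhds 0) :=
      Real.tendsto_exp_atBot.comp h1
    have h3 : Tendsto (fun t : ℝ => |e 0| * Real.exp (-(Kp * t))) atTop (nhds 0) := by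
      simpa using h2.const_mul (|e 0|)
    simpa using h3.add_const (ε / Kp)
  have hle : Filter.limsup (fun t => |e t|) atTop ≤ Filter.limsup B atTop := by
    apply Filter.limsup_le_limsup
    · filter_upwards [eventually_ge_atTop (0:ℝ)] with t ht
      exact hbound t ht
    · exact isCoboundedUnder_le_of_le atTop (fun t => abs_nonneg (e t))
    · exact hBtend.isBoundedUnder_le
  rw [hBtend.limsup_eq] at hle
  exact hle
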